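/- For every integer k ≥ 3 and every ε > 0, there exists N such that for every n ≥ N and every digraph D on n vertices, the number of k-element vertex subsets of D that induce a copy of the directed star S⃗_k is at most (α_k + ε)·C(n,k), where α_k = sup_{x ∈ [0,1)} k·x·(1−x)^{k−1}/(1−x^k). -/

import Mathlib

set_option maxHeartbeats 1600000

/-- The number of `k`-element vertex subsets of the digraph `D` (given by its arc
relation) that induce a copy of the directed star `S⃗ₖ`: there is a center `v ∈ S`
such that `D` has an arc `u → w` (for `u, w ∈ S`) iff `u = v` and `w ≠ v`. -/
noncomputable def starCount (k : ℕ) {V : Type} [Fintype V] (D : V → V → Prop) : ℕ :=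
  {S : Finset V | S.card = k ∧
    ∃ v ∈ S, ∀ u ∈ S, ∀ w ∈ S, (D u w ↔ (u = v ∧ w ≠ v))}.ncard

/-- `α_k = sup_{x ∈ [0,1)} k·x·(1−x)^{k−1}/(1−x^k)`. -/
noncomputable def alphaStar (k : ℕ) : ℝ :=
  sSup ((fun x : ℝ => (k : ℝ) * x * (1 - x) ^ (k - 1) / (1 - x ^ k)) '' Set.Ico 0 1)

namespace StarAux

lemma f_le_k {k : ℕ} (hk : 3 ≤ k) {x : ℝ} (hx : x ∈ Set.Ico (0:ℝ) 1) :
    (k : ℝ) * x * (1 - x) ^ (k - 1) / (1 - x ^ k) ≤ k := by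
  obtain ⟨h0, h1⟩ := hx
  have hxk : x ^ k ≤ x := by
    calc x ^ k ≤ x ^ 1 := pow_le_pow_of_le_one h0 h1.le (by omega)
    _ = x := pow_one x
  have hd : 0 < 1 - x ^ k := by
    have : x ^ k < 1 := pow_lt_one₀ h0 h1 (by omega)
    linarith
  rw [div_le_iff₀ hd]
  have h2 : (1 - x) ^ (k - 1) ≤ (1 - x) := by
    calc (1 - x) ^ (k-1) ≤ (1 - x) ^ 1 := pow_le_pow_of_le_one (by linarith) (by linarith) (by omega)
    _ = 1 - x := pow_one _
  have h3 : x * (1 - x) ^ (k - 1) ≤ 1 - x ^ k := by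
    calc x * (1-x)^(k-1) ≤ 1 * (1 - x) := by
          apply mul_le_mul h1.le h2 (pow_nonneg (by linarith) _) (by norm_num)
    _ = 1 - x := one_mul _
    _ ≤ 1 - x ^ k := by linarith
  calc (k:ℝ) * x * (1-x)^(k-1) = (k:ℝ) * (x * (1-x)^(k-1)) := by ring
  _ ≤ (k:ℝ) * (1 - x ^ k) := by
      apply mul_le_mul_of_nonneg_left h3 (by positivity)
  _ = (k:ℝ) * (1 - x^k) := rfl

lemma alpha_bdd {k : ℕ} (hk : 3 ≤ k) :
    BddAbove ((fun x : ℝ => (k : ℝ) * x * (1 - x) ^ (k - 1) / (1 - x ^ k)) '' Set.Ico 0 1) := by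
  refine ⟨k, ?_⟩
  rintro v ⟨x, hx, rfl⟩
  exact f_le_k hk hx

lemma alpha_ge {k : ℕ} (hk : 3 ≤ k) {x : ℝ} (hx : x ∈ Set.Ico (0:ℝ) 1) :
    (k : ℝ) * x * (1 - x) ^ (k - 1) / (1 - x ^ k) ≤ alphaStar k :=
  le_csSup (alpha_bdd hk) ⟨x, hx, rfl⟩

lemma alpha_nonneg {k : ℕ} (hk : 3 ≤ k) : 0 ≤ alphaStar k := by
  have := alpha_ge hk (show (0:ℝ) ∈ Set.Ico (0:ℝ) 1 by constructor <;> norm_num)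
  simpa using this

lemma alpha_le_k {k : ℕ} (hk : 3 ≤ k) : alphaStar k ≤ k := by
  have hne : ((fun x : ℝ => (k : ℝ) * x * (1 - x) ^ (k - 1) / (1 - x ^ k)) '' Set.Ico 0 1).Nonempty :=
    ⟨_, ⟨0, by constructor <;> norm_num, rfl⟩⟩
  apply csSup_le hne
  rintro v ⟨x, hx, rfl⟩
  exact f_le_k hk hx

/-- the key "Bellman" inequality -/
lemma alpha_key {k : ℕ} (hk : 3 ≤ k) {y m : ℝ} (h0 : 0 ≤ y) (hym : y ≤ m) :
    alphaStar k * (m - y) ^ k + k * ((m - y) * y ^ (k - 1)) ≤ alphaStar k * m ^ k := by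
  have hk0 : k ≠ 0 := by omega
  have hk10 : k - 1 ≠ 0 := by omega
  rcases eq_or_lt_of_le h0 with h0' | h0'
  · rw [← h0']
    rw [zero_pow hk10]
    simp
  rcases eq_or_lt_of_le hym with hym' | hym'
  · rw [hym']
    simp only [sub_self, zero_pow hk0, zero_mul, mul_zero, add_zero]
    have : (0:ℝ) ≤ m ^ k := pow_nonneg (by linarith) _
    nlinarith [alpha_nonneg hk]
  · have hm : (0:ℝ) < m := lt_of_le_of_lt h0 hym'
    set x : ℝ := (m - y) / m with hxdef
    have hx0 : 0 ≤ x := by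
      apply div_nonneg (by linarith) hm.le
    have hx1 : x < 1 := by
      rw [div_lt_one hm]; linarith
    have key := alpha_ge hk (x := x) ⟨hx0, hx1⟩
    have hd : 0 < 1 - x ^ k := by
      have : x ^ k < 1 := pow_lt_one₀ hx0 hx1 hk0
      linarith
    rw [div_le_iff₀ hd] at key
    have hmul := mul_le_mul_of_nonneg_right key (pow_nonneg hm.le k)
    have e1 : x * m = m - y := div_mul_cancel₀ _ hm.ne'
    have e2 : (1 - x) * m = y := by
      rw [hxdef]
      field_simp
      ring
    have emk : m ^ k = m * m ^ (k - 1) := by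
      rw [← pow_succ']
      congr 1
      omega
    have eL : (k:ℝ) * x * (1 - x) ^ (k - 1) * m ^ k = k * ((m - y) * y ^ (k - 1)) := by
      rw [emk, ← e1, ← e2, mul_pow]
      ring
    have eR : alphaStar k * (1 - x ^ k) * m ^ k
        = alphaStar k * m ^ k - alphaStar k * (m - y) ^ k := by
      rw [← e1, mul_pow]
      ring
    nlinarith [hmul, eL, eR]


lemma desc_ge_real {k n : ℕ} (hk : 1 ≤ k) (h : k ≤ n) :
    (n:ℝ) ^ k - (k:ℝ)^2 * (n:ℝ)^(k-1) ≤ (n.descFactorial k : ℝ) := by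
  have hn0 : 0 < (n:ℝ) := by
    have : 0 < n := lt_of_lt_of_le hk h
    exact_mod_cast this
  have hkn : (k:ℝ) ≤ (n:ℝ) := by exact_mod_cast h
  have step1 : ((n:ℝ) - k) ^ k ≤ (n.descFactorial k : ℝ) := by
    have e : (n.descFactorial k : ℝ) = ∏ i ∈ Finset.range k, ((n:ℝ) - i) := by
      rw [Nat.descFactorial_eq_prod_range, Nat.cast_prod]
      apply Finset.prod_congr rfl
      intro i hi
      have hin : i ≤ n := by
        have := Finset.mem_range.mp hi
        omega
      rw [Nat.cast_sub hin]
    rw [e]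
    calc ((n:ℝ) - k) ^ k = ∏ _i ∈ Finset.range k, ((n:ℝ) - k) := by
          rw [Finset.prod_const, Finset.card_range]
    _ ≤ ∏ i ∈ Finset.range k, ((n:ℝ) - i) := by
          apply Finset.prod_le_prod
          · intro i _; linarith
          · intro i hi
            have : (i:ℝ) ≤ (k:ℝ) := by
              have := Finset.mem_range.mp hi
              exact_mod_cast le_of_lt this
            linarith
  have step2 : (n:ℝ) ^ k - (k:ℝ)^2 * (n:ℝ)^(k-1) ≤ ((n:ℝ) - k) ^ k := by
    have hb := one_add_mul_le_pow (a := -((k:ℝ)/n)) (by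
      have : (k:ℝ)/n ≤ 1 := by
        rw [div_le_one hn0]; exact hkn
      linarith) k
    have hmul := mul_le_mul_of_nonneg_right hb (pow_nonneg hn0.le k)
    have e1 : (1 + (k:ℝ) * -((k:ℝ)/n)) * (n:ℝ)^k = (n:ℝ)^k - (k:ℝ)^2 * (n:ℝ)^(k-1) := by
      have emk : (n:ℝ) ^ k = (n:ℝ) * (n:ℝ) ^ (k - 1) := by
        rw [← pow_succ']; congr 1; omega
      field_simp
      rw [emk]
      ring
    have e2 : (1 + -((k:ℝ)/n)) ^ k * (n:ℝ)^k = ((n:ℝ) - k) ^ k := by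
      rw [← mul_pow]
      congr 1
      field_simp
      ring
    rw [e1, e2] at hmul
    exact hmul
  linarith

lemma final_num {k : ℕ} (hk : 3 ≤ k) {ε : ℝ} (hε : 0 < ε) :
    ∃ N : ℕ, ∀ n : ℕ, N ≤ n →
      alphaStar k * (n:ℝ) ^ k / (k.factorial : ℝ) ≤ (alphaStar k + ε) * (n.choose k : ℝ) := by
  refine ⟨k + 1 + ⌈((k:ℝ) + ε) * (k:ℝ)^2 / ε⌉₊, fun n hn => ?_⟩
  have hkn : k ≤ n := by omega
  have hnc : ((k:ℝ) + ε) * (k:ℝ)^2 / ε ≤ (n:ℝ) := by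
    have h1 : (⌈((k:ℝ) + ε) * (k:ℝ)^2 / ε⌉₊ : ℝ) ≤ (n:ℝ) := by
      have : ⌈((k:ℝ) + ε) * (k:ℝ)^2 / ε⌉₊ ≤ n := by omega
      exact_mod_cast this
    exact le_trans (Nat.le_ceil _) h1
  have hn0 : 0 < (n:ℝ) := by
    have : 0 < n := by omega
    exact_mod_cast this
  have ha := alpha_nonneg hk
  have hak := alpha_le_k hk
  -- key : ε * n^k ≥ (α+ε) * k^2 * n^(k-1)
  have hkey : (alphaStar k + ε) * (k:ℝ)^2 * (n:ℝ)^(k-1) ≤ ε * (n:ℝ)^k := by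
    have emk : (n:ℝ) ^ k = (n:ℝ) * (n:ℝ) ^ (k - 1) := by
      rw [← pow_succ']; congr 1; omega
    rw [emk]
    have h2 : (alphaStar k + ε) * (k:ℝ)^2 ≤ ε * (n:ℝ) := by
      have h3 : ((k:ℝ) + ε) * (k:ℝ)^2 ≤ ε * (n:ℝ) := by
        rw [div_le_iff₀ hε] at hnc
        linarith
      calc (alphaStar k + ε) * (k:ℝ)^2 ≤ ((k:ℝ) + ε) * (k:ℝ)^2 := by
            apply mul_le_mul_of_nonneg_right (by linarith) (by positivity)
      _ ≤ ε * (n:ℝ) := h3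
    calc (alphaStar k + ε) * (k:ℝ)^2 * (n:ℝ)^(k-1) ≤ (ε * (n:ℝ)) * (n:ℝ)^(k-1) := by
          apply mul_le_mul_of_nonneg_right h2 (pow_nonneg hn0.le _)
    _ = ε * ((n:ℝ) * (n:ℝ)^(k-1)) := by ring
  have hdesc := desc_ge_real (by omega : 1 ≤ k) hkn
  have hchoose : (n.descFactorial k : ℝ) = (k.factorial : ℝ) * (n.choose k : ℝ) := by
    rw [← Nat.cast_mul, ← Nat.descFactorial_eq_factorial_mul_choose]
  have hfac : (0:ℝ) < (k.factorial : ℝ) := by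
    exact_mod_cast k.factorial_pos
  rw [div_le_iff₀ hfac]
  calc alphaStar k * (n:ℝ)^k
      = (alphaStar k + ε) * ((n:ℝ)^k - (k:ℝ)^2 * (n:ℝ)^(k-1))
        + ((alphaStar k + ε) * (k:ℝ)^2 * (n:ℝ)^(k-1) - ε * (n:ℝ)^k) := by ring
  _ ≤ (alphaStar k + ε) * ((n:ℝ)^k - (k:ℝ)^2 * (n:ℝ)^(k-1)) := by linarith
  _ ≤ (alphaStar k + ε) * (n.descFactorial k : ℝ) := by
        apply mul_le_mul_of_nonneg_left hdesc (by linarith)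
  _ = (alphaStar k + ε) * (n.choose k : ℝ) * (k.factorial : ℝ) := by
        rw [hchoose]; ring


open Finset

variable {n : ℕ}

def isCfg (k : ℕ) (G : Fin n → Fin n → Bool) (S : Finset (Fin n)) : Prop :=
  S.card = k ∧ ∃ v ∈ S, (∀ u ∈ S, u ≠ v → (G v u = true ∧ G u v = false)) ∧
    ∀ u ∈ S, ∀ w ∈ S, u ≠ v → w ≠ v → u ≠ w → G u w = false

instance (k : ℕ) (G : Fin n → Fin n → Bool) : DecidablePred (isCfg k G) := fun S => by
  unfold isCfg; infer_instance

def scnt (k : ℕ) (G : Fin n → Fin n → Bool) (A : Finset (Fin n)) : ℕ :=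
  ((A.powerset).filter (isCfg k G)).card

def rel (G : Fin n → Fin n → Bool) (a b : Fin n) : Prop :=
  a = b ∨ (G a b = false ∧ G b a = false)

instance (G : Fin n → Fin n → Bool) (a b : Fin n) : Decidable (rel G a b) := by
  unfold rel; infer_instance

def twin (G : Fin n → Fin n → Bool) (a b : Fin n) : Prop :=
  ∀ y : Fin n, y ≠ a → y ≠ b → (G a y = G b y ∧ G y a = G y b)

def structuredG (G : Fin n → Fin n → Bool) : Prop :=
  ∀ a b : Fin n, a ≠ b → G a b = false → G b a = false → twin G a b

lemma rel_refl (G : Fin n → Fin n → Bool) (a : Fin n) : rel G a a := Or.inl rfl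

lemma rel_symm {G : Fin n → Fin n → Bool} {a b : Fin n} (h : rel G a b) : rel G b a := by
  rcases h with h | ⟨h1, h2⟩
  · exact Or.inl h.symm
  · exact Or.inr ⟨h2, h1⟩

lemma rel_trans {G : Fin n → Fin n → Bool} (hG : structuredG G) {a b c : Fin n}
    (h1 : rel G a b) (h2 : rel G b c) : rel G a c := by
  by_cases hab : a = b
  · rw [hab]; exact h2
  by_cases hbc : b = c
  · rw [← hbc]; exact h1
  by_cases hac : a = c
  · exact Or.inl hac
  rcases h1 with h1 | ⟨h1a, h1b⟩
  · exact absurd h1 hab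
  rcases h2 with h2 | ⟨h2a, h2b⟩
  · exact absurd h2 hbc
  have htw := hG a b hab h1a h1b
  obtain ⟨e1, e2⟩ := htw c (Ne.symm hac) (Ne.symm hbc)
  exact Or.inr ⟨e1.trans h2a, e2.trans h2b⟩

lemma choose_swap {a b j : ℕ} (hj : 1 ≤ j) (hab : a ≤ b) :
    b * a.choose j ≤ a * b.choose j := by
  rcases Nat.eq_zero_or_pos a with rfl | ha
  · simp [Nat.choose_eq_zero_of_lt (by omega : 0 < j)]
  have hb : 1 ≤ b := le_trans ha hab
  have id1 : a * (a-1).choose (j-1) = a.choose j * j := by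
    have := Nat.add_one_mul_choose_eq (a-1) (j-1)
    have e1 : (a-1) + 1 = a := by omega
    have e2 : (j-1) + 1 = j := by omega
    rw [e1, e2] at this
    exact this
  have id2 : b * (b-1).choose (j-1) = b.choose j * j := by
    have := Nat.add_one_mul_choose_eq (b-1) (j-1)
    have e1 : (b-1) + 1 = b := by omega
    have e2 : (j-1) + 1 = j := by omega
    rw [e1, e2] at this
    exact this
  have hcc : (a-1).choose (j-1) ≤ (b-1).choose (j-1) := Nat.choose_le_choose _ (by omega)
  have key : j * (b * a.choose j) ≤ j * (a * b.choose j) := by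
    calc j * (b * a.choose j) = b * (a.choose j * j) := by ring
    _ = b * (a * (a-1).choose (j-1)) := by rw [id1]
    _ = (a * b) * (a-1).choose (j-1) := by ring
    _ ≤ (a * b) * (b-1).choose (j-1) := Nat.mul_le_mul_left _ hcc
    _ = a * (b * (b-1).choose (j-1)) := by ring
    _ = a * (b.choose j * j) := by rw [id2]
    _ = j * (a * b.choose j) := by ring
  exact Nat.le_of_mul_le_mul_left key (by omega)

lemma scnt_empty {k : ℕ} (hk : 3 ≤ k) (G : Fin n → Fin n → Bool) :
    scnt k G (∅ : Finset (Fin n)) = 0 := by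
  unfold scnt
  rw [Finset.card_eq_zero, Finset.filter_eq_empty_iff]
  intro S hS
  rw [Finset.powerset_empty, Finset.mem_singleton] at hS
  subst hS
  intro hcfg
  have := hcfg.1
  simp at this
  omega

lemma structured_count {k : ℕ} (hk : 3 ≤ k) (G : Fin n → Fin n → Bool) (hG : structuredG G) :
    ∀ (m : ℕ) (A : Finset (Fin n)), A.card ≤ m →
      (scnt k G A : ℝ) ≤ alphaStar k * (A.card : ℝ) ^ k / (k.factorial : ℝ) := by
  intro m
  induction m with
  | zero =>
      intro A hA
      have hA0 : A = ∅ := Finset.card_eq_zero.mp (Nat.le_zero.mp hA)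
      subst hA0
      rw [scnt_empty hk]
      simp [zero_pow (show k ≠ 0 by omega)]
  | succ m IH =>
      intro A hA
      by_cases hAm : A.card ≤ m
      · exact IH A hAm
      have hcard : A.card = m + 1 := by omega
      have hAne : A.Nonempty := Finset.card_pos.mp (by omega)
      obtain ⟨t, htA, htmax⟩ :=
        Finset.exists_max_image A (fun a => (A.filter (fun b => rel G b a)).card) hAne
      set Y := A.filter (fun b => rel G b t) with hYdef
      set Z := A.filter (fun b => G t b = true ∧ G b t = false) with hZdef
      set V' := A.filter (fun b => G b t = true ∧ G t b = false) with hVdef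
      have htY : t ∈ Y := Finset.mem_filter.mpr ⟨htA, rel_refl G t⟩
      have hYA : Y ⊆ A := Finset.filter_subset _ _
      have hy1 : 1 ≤ Y.card := Finset.card_pos.mpr ⟨t, htY⟩
      have hZsub : Z ⊆ A \ Y := by
        intro b hb
        obtain ⟨hbA, h1, h2⟩ := Finset.mem_filter.mp hb
        refine Finset.mem_sdiff.mpr ⟨hbA, ?_⟩
        intro hbY
        obtain ⟨-, hrel⟩ := Finset.mem_filter.mp hbY
        rcases hrel with heq | ⟨e1, e2⟩
        · rw [heq] at h1 h2; rw [h1] at h2; simp at h2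
        · rw [h1] at e2; simp at e2
      have hVsub : V' ⊆ A \ Y := by
        intro b hb
        obtain ⟨hbA, h1, h2⟩ := Finset.mem_filter.mp hb
        refine Finset.mem_sdiff.mpr ⟨hbA, ?_⟩
        intro hbY
        obtain ⟨-, hrel⟩ := Finset.mem_filter.mp hbY
        rcases hrel with heq | ⟨e1, e2⟩
        · rw [heq] at h1 h2; rw [h1] at h2; simp at h2
        · rw [h1] at e1; simp at e1
      have hVZ : Disjoint V' Z := by
        rw [Finset.disjoint_left]
        intro b hbV hbZ
        obtain ⟨-, h1, h2⟩ := Finset.mem_filter.mp hbV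
        obtain ⟨-, h3, h4⟩ := Finset.mem_filter.mp hbZ
        rw [h1] at h4; simp at h4
      set R := Z.filter (fun r => ∀ b ∈ Z, rel G r b → r ≤ b) with hRdef
      set Fa := ((V' ×ˢ Y.powersetCard (k-1)).image (fun p => insert p.1 p.2)) with hFadef
      set Fb := (R.biUnion (fun r =>
        ((Y ×ˢ (Z.filter (fun b => rel G b r)).powersetCard (k-1)).image
          (fun p => insert p.1 p.2)))) with hFbdef
      set C := (A.powerset).filter (isCfg k G) with hCdef
      have hsplit : C.card = (C.filter (fun S => S ⊆ A \ Y)).card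
          + (C.filter (fun S => ¬ S ⊆ A \ Y)).card :=
        (Finset.card_filter_add_card_filter_not _).symm
      have hpart1 : (C.filter (fun S => S ⊆ A \ Y)).card ≤ scnt k G (A \ Y) := by
        apply Finset.card_le_card
        intro S hS
        obtain ⟨hSC, hSsub⟩ := Finset.mem_filter.mp hS
        obtain ⟨hSpow, hcfg⟩ := Finset.mem_filter.mp hSC
        exact Finset.mem_filter.mpr ⟨Finset.mem_powerset.mpr hSsub, hcfg⟩
      have hpart2 : (C.filter (fun S => ¬ S ⊆ A \ Y)).card ≤ Fa.card + Fb.card := by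
        refine le_trans (Finset.card_le_card ?_) (Finset.card_union_le _ _)
        intro S hS
        obtain ⟨hSC, hSnot⟩ := Finset.mem_filter.mp hS
        obtain ⟨hSpow, hcfg⟩ := Finset.mem_filter.mp hSC
        have hSA : S ⊆ A := Finset.mem_powerset.mp hSpow
        obtain ⟨hScard, v, hvS, hctr, hleaf⟩ := hcfg
        have hx : ∃ x ∈ S, x ∈ Y := by
          by_contra hno
          push_neg at hno
          apply hSnot
          intro s hs
          exact Finset.mem_sdiff.mpr ⟨hSA hs, hno s hs⟩
        obtain ⟨x, hxS, hxY⟩ := hx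
        set L := S.erase v with hLdef
        have hLcard : L.card = k - 1 := by
          rw [hLdef, Finset.card_erase_of_mem hvS, hScard]
        have hSins : insert v L = S := Finset.insert_erase hvS
        by_cases hvY : v ∈ Y
        · -- case (b) : center in Y, S ∈ Fb
          have hrelvt : rel G v t := (Finset.mem_filter.mp hvY).2
          have hLZ : ∀ a ∈ L, a ∈ Z := by
            intro a haL
            have haS : a ∈ S := Finset.erase_subset _ _ haL
            have hav : a ≠ v := Finset.ne_of_mem_erase haL
            obtain ⟨hpure1, hpure2⟩ := hctr a haS hav
            by_cases hvt : v = t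
            · refine Finset.mem_filter.mpr ⟨hSA haS, ?_, ?_⟩
              · rw [← hvt]; exact hpure1
              · rw [← hvt]; exact hpure2
            · rcases hrelvt with heq | ⟨e1, e2⟩
              · exact absurd heq hvt
              have htw := hG v t hvt e1 e2
              have hat : a ≠ t := by
                intro h
                rw [h] at hpure1
                rw [hpure1] at e1
                simp at e1
              obtain ⟨c1, c2⟩ := htw a hav hat
              exact Finset.mem_filter.mpr ⟨hSA haS, c1.symm.trans hpure1, c2.symm.trans hpure2⟩
          have hLne : L.Nonempty := by
            rw [← Finset.card_pos, hLcard]; omega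
          obtain ⟨a₀, ha₀⟩ := hLne
          have hLrel : ∀ a ∈ L, ∀ b ∈ L, rel G a b := by
            intro a ha b hb
            by_cases hab : a = b
            · exact Or.inl hab
            have haS : a ∈ S := Finset.erase_subset _ _ ha
            have hbS : b ∈ S := Finset.erase_subset _ _ hb
            have hav : a ≠ v := Finset.ne_of_mem_erase ha
            have hbv : b ≠ v := Finset.ne_of_mem_erase hb
            exact Or.inr ⟨hleaf a haS b hbS hav hbv hab,
              hleaf b hbS a haS hbv hav (Ne.symm hab)⟩
          have ha₀Z : a₀ ∈ Z := hLZ a₀ ha₀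
          have hCZne : (Z.filter (fun b => rel G b a₀)).Nonempty :=
            ⟨a₀, Finset.mem_filter.mpr ⟨ha₀Z, rel_refl G a₀⟩⟩
          set r := (Z.filter (fun b => rel G b a₀)).min' hCZne with hrdef
          have hrCZ : r ∈ Z.filter (fun b => rel G b a₀) := Finset.min'_mem _ _
          obtain ⟨hrZ, hra₀⟩ := Finset.mem_filter.mp hrCZ
          have hrR : r ∈ R := by
            refine Finset.mem_filter.mpr ⟨hrZ, ?_⟩
            intro b hbZ hrb
            apply Finset.min'_le
            exact Finset.mem_filter.mpr ⟨hbZ, rel_trans hG (rel_symm hrb) hra₀⟩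
          have hLsub : L ⊆ Z.filter (fun b => rel G b r) := by
            intro a haL
            refine Finset.mem_filter.mpr ⟨hLZ a haL, ?_⟩
            exact rel_trans hG (hLrel a haL a₀ ha₀) (rel_symm hra₀)
          refine Finset.mem_union_right _ (Finset.mem_biUnion.mpr ⟨r, hrR, ?_⟩)
          refine Finset.mem_image.mpr ⟨(v, L), ?_, hSins⟩
          exact Finset.mem_product.mpr
            ⟨hvY, Finset.mem_powersetCard.mpr ⟨hLsub, hLcard⟩⟩
        · -- case (a) : center not in Y, S ∈ Fa
          have hxv : x ≠ v := fun h => hvY (h ▸ hxY)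
          have hrelxt : rel G x t := (Finset.mem_filter.mp hxY).2
          have hLY : L ⊆ Y := by
            intro a haL
            have haS : a ∈ S := Finset.erase_subset _ _ haL
            have hav : a ≠ v := Finset.ne_of_mem_erase haL
            by_cases hax : a = x
            · rw [hax]; exact hxY
            · have h1 : G a x = false := hleaf a haS x hxS hav hxv hax
              have h2 : G x a = false := hleaf x hxS a haS hxv hav (Ne.symm hax)
              have hrelax : rel G a x := Or.inr ⟨h1, h2⟩
              exact Finset.mem_filter.mpr ⟨hSA haS, rel_trans hG hrelax hrelxt⟩
          obtain ⟨hp1, hp2⟩ := hctr x hxS hxv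
          have hvV : v ∈ V' := by
            by_cases hxt : x = t
            · refine Finset.mem_filter.mpr ⟨hSA hvS, ?_, ?_⟩
              · rw [← hxt]; exact hp1
              · rw [← hxt]; exact hp2
            · rcases hrelxt with heq | ⟨e1, e2⟩
              · exact absurd heq hxt
              have hvt : v ≠ t := by
                intro h
                rw [h] at hp1
                rw [hp1] at e2
                simp at e2
              have htw := hG x t hxt e1 e2
              obtain ⟨c1, c2⟩ := htw v (Ne.symm hxv) hvt
              exact Finset.mem_filter.mpr ⟨hSA hvS, c2.symm.trans hp1, c1.symm.trans hp2⟩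
          exact Finset.mem_union_left _ (Finset.mem_image.mpr ⟨(v, L),
            Finset.mem_product.mpr ⟨hvV, Finset.mem_powersetCard.mpr ⟨hLY, hLcard⟩⟩, hSins⟩)
      have hFa : Fa.card ≤ V'.card * (Y.card.choose (k-1)) := by
        calc Fa.card ≤ (V' ×ˢ Y.powersetCard (k-1)).card := Finset.card_image_le
        _ = V'.card * (Y.powersetCard (k-1)).card := Finset.card_product _ _
        _ = V'.card * (Y.card.choose (k-1)) := by rw [Finset.card_powersetCard]
      have hFb : Fb.card ≤
          ∑ r ∈ R, Y.card * ((Z.filter (fun b => rel G b r)).card.choose (k-1)) := by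
        refine le_trans Finset.card_biUnion_le (Finset.sum_le_sum ?_)
        intro r hr
        calc ((Y ×ˢ (Z.filter (fun b => rel G b r)).powersetCard (k-1)).image
              (fun p => insert p.1 p.2)).card
            ≤ (Y ×ˢ (Z.filter (fun b => rel G b r)).powersetCard (k-1)).card :=
              Finset.card_image_le
        _ = Y.card * ((Z.filter (fun b => rel G b r)).card.choose (k-1)) := by
              rw [Finset.card_product, Finset.card_powersetCard]
      have hdisj : ∀ r₁ ∈ R, ∀ r₂ ∈ R, r₁ ≠ r₂ →
          Disjoint (Z.filter (fun b => rel G b r₁)) (Z.filter (fun b => rel G b r₂)) := by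
        intro r₁ h₁ r₂ h₂ hne
        rw [Finset.disjoint_left]
        intro b hb₁ hb₂
        obtain ⟨hbZ, hbr₁⟩ := Finset.mem_filter.mp hb₁
        obtain ⟨-, hbr₂⟩ := Finset.mem_filter.mp hb₂
        obtain ⟨h₁Z, h₁min⟩ := Finset.mem_filter.mp h₁
        obtain ⟨h₂Z, h₂min⟩ := Finset.mem_filter.mp h₂
        have h12 : rel G r₁ r₂ := rel_trans hG (rel_symm hbr₁) hbr₂
        exact hne (le_antisymm (h₁min r₂ h₂Z h12) (h₂min r₁ h₁Z (rel_symm h12)))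
      have hsumZ : ∑ r ∈ R, (Z.filter (fun b => rel G b r)).card ≤ Z.card := by
        rw [← Finset.card_biUnion hdisj]
        apply Finset.card_le_card
        exact Finset.biUnion_subset.mpr fun r _ => Finset.filter_subset _ _
      have hclassmax : ∀ r ∈ R, (Z.filter (fun b => rel G b r)).card ≤ Y.card := by
        intro r hr
        have hrZ : r ∈ Z := Finset.mem_of_mem_filter r hr
        have hrA : r ∈ A := Finset.mem_of_mem_filter r hrZ
        calc (Z.filter (fun b => rel G b r)).card
            ≤ (A.filter (fun b => rel G b r)).card := by
              apply Finset.card_le_card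
              intro b hb
              obtain ⟨hbZ, hbr⟩ := Finset.mem_filter.mp hb
              exact Finset.mem_filter.mpr ⟨Finset.mem_of_mem_filter b hbZ, hbr⟩
        _ ≤ (A.filter (fun b => rel G b t)).card := htmax r hrA
      have hFb2 : Fb.card ≤ Z.card * (Y.card.choose (k-1)) := by
        refine le_trans hFb ?_
        calc ∑ r ∈ R, Y.card * ((Z.filter (fun b => rel G b r)).card.choose (k-1))
            ≤ ∑ r ∈ R, (Z.filter (fun b => rel G b r)).card * (Y.card.choose (k-1)) := by
              apply Finset.sum_le_sum
              intro r hr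
              exact choose_swap (by omega) (hclassmax r hr)
        _ = (∑ r ∈ R, (Z.filter (fun b => rel G b r)).card) * (Y.card.choose (k-1)) := by
              rw [Finset.sum_mul]
        _ ≤ Z.card * (Y.card.choose (k-1)) := Nat.mul_le_mul_right _ hsumZ
      have hVZcard : V'.card + Z.card ≤ (A \ Y).card := by
        rw [← Finset.card_union_of_disjoint hVZ]
        apply Finset.card_le_card
        exact Finset.union_subset hVsub hZsub
      -- total nat bound
      have htot : scnt k G A ≤ scnt k G (A \ Y) + (A \ Y).card * (Y.card.choose (k-1)) := by
        have : scnt k G A = C.card := rfl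
        rw [this, hsplit]
        have h2 : Fa.card + Fb.card ≤ (A \ Y).card * (Y.card.choose (k-1)) := by
          calc Fa.card + Fb.card ≤ V'.card * (Y.card.choose (k-1))
              + Z.card * (Y.card.choose (k-1)) := Nat.add_le_add hFa hFb2
          _ = (V'.card + Z.card) * (Y.card.choose (k-1)) := by ring
          _ ≤ (A \ Y).card * (Y.card.choose (k-1)) :=
              Nat.mul_le_mul_right _ hVZcard
        omega
      -- now the real-valued computation
      have hyA : Y.card ≤ A.card := Finset.card_le_card hYA
      have hBcard : (A \ Y).card = A.card - Y.card := Finset.card_sdiff_of_subset hYA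
      have hIH := IH (A \ Y) (by omega)
      have hBcast : (((A \ Y).card : ℕ) : ℝ) = (A.card : ℝ) - (Y.card : ℝ) := by
        rw [hBcard]
        exact Nat.cast_sub hyA
      have hfac1 : (0:ℝ) < ((k-1).factorial : ℝ) := by exact_mod_cast (k-1).factorial_pos
      have hfack : (0:ℝ) < (k.factorial : ℝ) := by exact_mod_cast k.factorial_pos
      have hkfact : (k.factorial : ℝ) = (k : ℝ) * ((k-1).factorial : ℝ) := by
        have h := Nat.factorial_succ (k-1)
        have e : k - 1 + 1 = k := by omega
        rw [e] at h
        rw [h]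
        push_cast [e]
        ring
      have hchooseR : ((Y.card.choose (k-1) : ℕ) : ℝ) ≤ ((Y.card : ℕ) : ℝ) ^ (k-1) / ((k-1).factorial : ℝ) := by
        rw [le_div_iff₀ hfac1]
        have h1 : Y.card.choose (k-1) * (k-1).factorial ≤ Y.card ^ (k-1) := by
          calc Y.card.choose (k-1) * (k-1).factorial
              = (k-1).factorial * Y.card.choose (k-1) := by ring
          _ = Y.card.descFactorial (k-1) := (Nat.descFactorial_eq_factorial_mul_choose _ _).symm
          _ ≤ Y.card ^ (k-1) := Nat.descFactorial_le_pow _ _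
        exact_mod_cast h1
      have hkey := alpha_key hk (y := ((Y.card : ℕ) : ℝ)) (m := ((A.card : ℕ) : ℝ))
        (by positivity) (by exact_mod_cast hyA)
      -- assemble
      have hchain : (scnt k G A : ℝ) ≤ alphaStar k * (((A.card : ℕ) : ℝ) - ((Y.card : ℕ) : ℝ)) ^ k / (k.factorial : ℝ)
          + (((A.card : ℕ) : ℝ) - ((Y.card : ℕ) : ℝ)) * (((Y.card : ℕ) : ℝ) ^ (k-1) / ((k-1).factorial : ℝ)) := by
        calc (scnt k G A : ℝ)
            ≤ (scnt k G (A \ Y) : ℝ) + ((A \ Y).card : ℝ) * ((Y.card.choose (k-1) : ℕ) : ℝ) := by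
              exact_mod_cast htot
        _ ≤ alphaStar k * (((A \ Y).card : ℕ) : ℝ) ^ k / (k.factorial : ℝ)
              + ((A \ Y).card : ℝ) * (((Y.card : ℕ) : ℝ) ^ (k-1) / ((k-1).factorial : ℝ)) := by
              apply add_le_add hIH
              apply mul_le_mul_of_nonneg_left hchooseR (by positivity)
        _ = alphaStar k * (((A.card : ℕ) : ℝ) - ((Y.card : ℕ) : ℝ)) ^ k / (k.factorial : ℝ)
              + (((A.card : ℕ) : ℝ) - ((Y.card : ℕ) : ℝ)) * (((Y.card : ℕ) : ℝ) ^ (k-1) / ((k-1).factorial : ℝ)) := by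
              rw [hBcast]
      have hfinal : alphaStar k * (((A.card : ℕ) : ℝ) - ((Y.card : ℕ) : ℝ)) ^ k / (k.factorial : ℝ)
          + (((A.card : ℕ) : ℝ) - ((Y.card : ℕ) : ℝ)) * (((Y.card : ℕ) : ℝ) ^ (k-1) / ((k-1).factorial : ℝ))
          ≤ alphaStar k * ((A.card : ℕ) : ℝ) ^ k / (k.factorial : ℝ) := by
        have e : (((A.card : ℕ) : ℝ) - ((Y.card : ℕ) : ℝ)) * (((Y.card : ℕ) : ℝ) ^ (k-1) / ((k-1).factorial : ℝ))
            = (k : ℝ) * ((((A.card : ℕ) : ℝ) - ((Y.card : ℕ) : ℝ)) * ((Y.card : ℕ) : ℝ) ^ (k-1)) / (k.factorial : ℝ) := by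
          rw [hkfact]
          field_simp
        rw [e, ← add_div]
        exact (div_le_div_iff_of_pos_right hfack).mpr hkey
      calc (scnt k G A : ℝ) ≤ _ := hchain
      _ ≤ alphaStar k * ((A.card : ℕ) : ℝ) ^ k / (k.factorial : ℝ) := hfinal

/-! ### merge (Zykov symmetrization) -/

def mrg (G : Fin n → Fin n → Bool) (u w : Fin n) : Fin n → Fin n → Bool := fun a b =>
  if a = b ∨ (a = u ∧ b = w) ∨ (a = w ∧ b = u) then false
  else G (if a = w then u else a) (if b = w then u else b)

lemma mrg_nw {G : Fin n → Fin n → Bool} {u w a b : Fin n}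
    (haw : a ≠ w) (hbw : b ≠ w) (hab : a ≠ b) : mrg G u w a b = G a b := by
  have hc : ¬(a = b ∨ (a = u ∧ b = w) ∨ (a = w ∧ b = u)) := by
    rintro (h | ⟨-, h⟩ | ⟨h, -⟩)
    exacts [hab h, hbw h, haw h]
  unfold mrg
  rw [if_neg hc, if_neg haw, if_neg hbw]

lemma mrg_uw {G : Fin n → Fin n → Bool} {u w : Fin n} : mrg G u w u w = false := by
  unfold mrg
  rw [if_pos (Or.inr (Or.inl ⟨rfl, rfl⟩))]

lemma mrg_wu {G : Fin n → Fin n → Bool} {u w : Fin n} : mrg G u w w u = false := by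
  unfold mrg
  rw [if_pos (Or.inr (Or.inr ⟨rfl, rfl⟩))]

lemma mrg_aw {G : Fin n → Fin n → Bool} {u w a : Fin n}
    (hau : a ≠ u) (haw : a ≠ w) : mrg G u w a w = G a u := by
  have hc : ¬(a = w ∨ (a = u ∧ w = w) ∨ (a = w ∧ w = u)) := by
    rintro (h | ⟨h, -⟩ | ⟨h, -⟩)
    exacts [haw h, hau h, haw h]
  unfold mrg
  rw [if_neg hc, if_neg haw, if_pos rfl]

lemma mrg_wa {G : Fin n → Fin n → Bool} {u w a : Fin n}
    (huw : u ≠ w) (hau : a ≠ u) (haw : a ≠ w) : mrg G u w w a = G u a := by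
  have hc : ¬(w = a ∨ (w = u ∧ a = w) ∨ (w = w ∧ a = u)) := by
    rintro (h | ⟨h, -⟩ | ⟨-, h⟩)
    exacts [haw h.symm, huw h.symm, hau h]
  unfold mrg
  rw [if_neg hc, if_pos rfl, if_neg haw]

lemma cfg_mrg_avoid {k : ℕ} {G : Fin n → Fin n → Bool} {u w : Fin n} {S : Finset (Fin n)}
    (hwS : w ∉ S) (h : isCfg k G S) : isCfg k (mrg G u w) S := by
  obtain ⟨hcard, v, hvS, hctr, hleaf⟩ := h
  have hne : ∀ a ∈ S, a ≠ w := fun a ha h => hwS (h ▸ ha)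
  refine ⟨hcard, v, hvS, ?_, ?_⟩
  · intro a haS hav
    obtain ⟨h1, h2⟩ := hctr a haS hav
    rw [mrg_nw (hne v hvS) (hne a haS) (Ne.symm hav), mrg_nw (hne a haS) (hne v hvS) hav]
    exact ⟨h1, h2⟩
  · intro a haS b hbS hav hbv hab
    rw [mrg_nw (hne a haS) (hne b hbS) hab]
    exact hleaf a haS b hbS hav hbv hab

lemma cfg_mrg_both {k : ℕ} {G : Fin n → Fin n → Bool} {u w : Fin n} {S : Finset (Fin n)}
    (huw : u ≠ w) (h1 : G u w = false) (h2 : G w u = false)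
    (huS : u ∈ S) (hwS : w ∈ S) (h : isCfg k G S) : isCfg k (mrg G u w) S := by
  obtain ⟨hcard, v, hvS, hctr, hleaf⟩ := h
  have hvu : v ≠ u := by
    intro h'
    have := (hctr w hwS (by rw [h']; exact (Ne.symm huw))).1
    rw [h'] at this
    rw [this] at h1
    simp at h1
  have hvw : v ≠ w := by
    intro h'
    have := (hctr u huS (by rw [h']; exact huw)).1
    rw [h'] at this
    rw [this] at h2
    simp at h2
  refine ⟨hcard, v, hvS, ?_, ?_⟩
  · intro a haS hav
    by_cases haw : a = w
    · subst haw
      constructor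
      · rw [mrg_aw hvu hvw]
        exact (hctr u huS (Ne.symm hvu)).1
      · rw [mrg_wa huw hvu hvw]
        exact (hctr u huS (Ne.symm hvu)).2
    · constructor
      · rw [mrg_nw hvw haw (Ne.symm hav)]
        exact (hctr a haS hav).1
      · rw [mrg_nw haw hvw hav]
        exact (hctr a haS hav).2
  · intro a haS b hbS hav hbv hab
    by_cases haw : a = w
    · subst haw
      by_cases hbu : b = u
      · subst hbu
        exact mrg_wu
      · rw [mrg_wa huw hbu (Ne.symm hab)]
        exact hleaf u huS b hbS (Ne.symm hvu) hbv (Ne.symm hbu)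
    · by_cases hbw : b = w
      · subst hbw
        by_cases hau : a = u
        · subst hau
          exact mrg_uw
        · rw [mrg_aw hau haw]
          exact hleaf a haS u huS hav (Ne.symm hvu) hau
      · rw [mrg_nw haw hbw hab]
        exact hleaf a haS b hbS hav hbv hab

lemma cfg_mrg_move {k : ℕ} {G : Fin n → Fin n → Bool} {u w : Fin n} {S : Finset (Fin n)}
    (hk : 3 ≤ k) (huw : u ≠ w) (huS : u ∈ S) (hwS : w ∉ S) (h : isCfg k G S) :
    isCfg k (mrg G u w) (insert w (S.erase u)) := by
  obtain ⟨hcard, v, hvS, hctr, hleaf⟩ := h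
  set T := insert w (S.erase u) with hTdef
  have hmemT : ∀ x, x ∈ T ↔ (x = w ∨ (x ∈ S ∧ x ≠ u)) := by
    intro x
    rw [hTdef, Finset.mem_insert, Finset.mem_erase]
    tauto
  have huT : u ∉ T := by
    rw [hmemT]
    push_neg
    exact ⟨huw, fun _ => rfl⟩
  have heval : ∀ a ∈ T, ∀ b ∈ T, a ≠ b →
      mrg G u w a b = G (if a = w then u else a) (if b = w then u else b) := by
    intro a haT b hbT hab
    unfold mrg
    rw [if_neg]
    rintro (h | ⟨hau, -⟩ | ⟨-, hbu⟩)
    · exact hab h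
    · exact huT (hau ▸ haT)
    · exact huT (hbu ▸ hbT)
  have hTcard : T.card = k := by
    rw [hTdef, Finset.card_insert_of_notMem
      (fun hmem => hwS (Finset.mem_of_mem_erase hmem)), Finset.card_erase_of_mem huS, hcard]
    omega
  have hρS : ∀ a ∈ T, (if a = w then u else a) ∈ S := by
    intro a haT
    by_cases haw : a = w
    · rw [if_pos haw]; exact huS
    · rw [if_neg haw]
      rcases (hmemT a).mp haT with h | ⟨h, -⟩
      · exact absurd h haw
      · exact h
  have hρinj : ∀ a ∈ T, ∀ b ∈ T, a ≠ b →
      (if a = w then u else a) ≠ (if b = w then u else b) := by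
    intro a haT b hbT hab
    by_cases haw : a = w
    · rw [if_pos haw]
      by_cases hbw : b = w
      · exact absurd (haw.trans hbw.symm) hab
      · rw [if_neg hbw]
        rcases (hmemT b).mp hbT with h | ⟨-, h⟩
        · exact absurd h hbw
        · exact fun hh => h hh.symm
    · rw [if_neg haw]
      by_cases hbw : b = w
      · rw [if_pos hbw]
        rcases (hmemT a).mp haT with h | ⟨-, h⟩
        · exact absurd h haw
        · exact h
      · rw [if_neg hbw]; exact hab
  set v' := if v = u then w else v with hv'def
  have hv'T : v' ∈ T := by
    rw [hmemT]
    by_cases hvu : v = u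
    · rw [hv'def, if_pos hvu]; left; rfl
    · rw [hv'def, if_neg hvu]; right; exact ⟨hvS, hvu⟩
  have hρv' : (if v' = w then u else v') = v := by
    by_cases hvu : v = u
    · rw [hv'def, if_pos hvu, if_pos rfl, hvu]
    · have hvv : v' = v := by rw [hv'def, if_neg hvu]
      rw [hvv, if_neg (fun h => hwS (by rw [← h]; exact hvS))]
  refine ⟨hTcard, v', hv'T, ?_, ?_⟩
  · intro a haT hav'
    rw [heval v' hv'T a haT (Ne.symm hav'), heval a haT v' hv'T hav', hρv']
    have haS := hρS a haT
    have hane : (if a = w then u else a) ≠ v := by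
      rw [← hρv']
      exact hρinj a haT v' hv'T hav'
    exact ⟨(hctr _ haS hane).1, (hctr _ haS hane).2⟩
  · intro a haT b hbT hav' hbv' hab
    rw [heval a haT b hbT hab]
    have haS := hρS a haT
    have hbS := hρS b hbT
    have hane : (if a = w then u else a) ≠ v := by
      rw [← hρv']; exact hρinj a haT v' hv'T hav'
    have hbne : (if b = w then u else b) ≠ v := by
      rw [← hρv']; exact hρinj b hbT v' hv'T hbv'
    exact hleaf _ haS _ hbS hane hbne (hρinj a haT b hbT hab)

lemma merge_ge {k : ℕ} (hk : 3 ≤ k) (G : Fin n → Fin n → Bool) {u w : Fin n}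
    (huw : u ≠ w) (h1 : G u w = false) (h2 : G w u = false) :
    ((Finset.univ.powerset.filter (isCfg k G)).filter (fun S => u ∉ S ∧ w ∉ S)).card
    + 2 * ((Finset.univ.powerset.filter (isCfg k G)).filter (fun S => u ∈ S ∧ w ∉ S)).card
    + ((Finset.univ.powerset.filter (isCfg k G)).filter (fun S => u ∈ S ∧ w ∈ S)).card
    ≤ scnt k (mrg G u w) Finset.univ := by
  set C := Finset.univ.powerset.filter (isCfg k G) with hC
  set D := Finset.univ.powerset.filter (isCfg k (mrg G u w)) with hD
  set F0 := C.filter (fun S => u ∉ S ∧ w ∉ S) with hF0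
  set F1 := C.filter (fun S => u ∈ S ∧ w ∉ S) with hF1
  set F2 := F1.image (fun S => insert w (S.erase u)) with hF2
  set F3 := C.filter (fun S => u ∈ S ∧ w ∈ S) with hF3
  have hmemC : ∀ S, S ∈ C ↔ isCfg k G S := by
    intro S
    rw [hC, Finset.mem_filter]
    simp [Finset.mem_powerset]
  have hmemD : ∀ S, S ∈ D ↔ isCfg k (mrg G u w) S := by
    intro S
    rw [hD, Finset.mem_filter]
    simp [Finset.mem_powerset]
  have hF0D : F0 ⊆ D := by
    intro S hS
    obtain ⟨hSC, hu, hw⟩ := Finset.mem_filter.mp hS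
    exact (hmemD S).mpr (cfg_mrg_avoid hw ((hmemC S).mp hSC))
  have hF1D : F1 ⊆ D := by
    intro S hS
    obtain ⟨hSC, hu, hw⟩ := Finset.mem_filter.mp hS
    exact (hmemD S).mpr (cfg_mrg_avoid hw ((hmemC S).mp hSC))
  have hF3D : F3 ⊆ D := by
    intro S hS
    obtain ⟨hSC, hu, hw⟩ := Finset.mem_filter.mp hS
    exact (hmemD S).mpr (cfg_mrg_both huw h1 h2 hu hw ((hmemC S).mp hSC))
  have hF2D : F2 ⊆ D := by
    intro T hT
    obtain ⟨S, hSF1, rfl⟩ := Finset.mem_image.mp hT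
    obtain ⟨hSC, hu, hw⟩ := Finset.mem_filter.mp hSF1
    exact (hmemD _).mpr (cfg_mrg_move hk huw hu hw ((hmemC S).mp hSC))
  have htr0 : ∀ S ∈ F0, u ∉ S ∧ w ∉ S := fun S hS => (Finset.mem_filter.mp hS).2
  have htr1 : ∀ S ∈ F1, u ∈ S ∧ w ∉ S := fun S hS => (Finset.mem_filter.mp hS).2
  have htr3 : ∀ S ∈ F3, u ∈ S ∧ w ∈ S := fun S hS => (Finset.mem_filter.mp hS).2
  have htr2 : ∀ S ∈ F2, u ∉ S ∧ w ∈ S := by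
    intro T hT
    obtain ⟨S, hSF1, rfl⟩ := Finset.mem_image.mp hT
    constructor
    · intro hmem
      rcases Finset.mem_insert.mp hmem with h | h
      · exact huw h
      · exact Finset.notMem_erase u S h
    · exact Finset.mem_insert_self _ _
  have hcard2 : F2.card = F1.card := by
    apply Finset.card_image_of_injOn
    intro S hS S' hS' heq
    obtain ⟨-, huS, hwS⟩ := Finset.mem_filter.mp (Finset.mem_coe.mp hS)
    obtain ⟨-, huS', hwS'⟩ := Finset.mem_filter.mp (Finset.mem_coe.mp hS')
    have heq' : insert w (S.erase u) = insert w (S'.erase u) := heq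
    have hrec : ∀ X : Finset (Fin n), u ∈ X → w ∉ X →
        insert u ((insert w (X.erase u)).erase w) = X := by
      intro X huX hwX
      rw [Finset.erase_insert (fun hmem => hwX (Finset.mem_of_mem_erase hmem)),
        Finset.insert_erase huX]
    calc S = insert u ((insert w (S.erase u)).erase w) := (hrec S huS hwS).symm
    _ = insert u ((insert w (S'.erase u)).erase w) := by rw [heq']
    _ = S' := hrec S' huS' hwS'
  have hdisj01 : Disjoint F0 F1 :=
    Finset.disjoint_left.mpr (fun S h0 h1' => (htr0 S h0).1 (htr1 S h1').1)
  have hdisj02 : Disjoint F0 F2 :=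
    Finset.disjoint_left.mpr (fun S h0 h2' => (htr0 S h0).2 (htr2 S h2').2)
  have hdisj03 : Disjoint F0 F3 :=
    Finset.disjoint_left.mpr (fun S h0 h3' => (htr0 S h0).1 (htr3 S h3').1)
  have hdisj12 : Disjoint F1 F2 :=
    Finset.disjoint_left.mpr (fun S ha hb => (htr2 S hb).1 (htr1 S ha).1)
  have hdisj13 : Disjoint F1 F3 :=
    Finset.disjoint_left.mpr (fun S ha hb => (htr1 S ha).2 (htr3 S hb).2)
  have hdisj23 : Disjoint F2 F3 :=
    Finset.disjoint_left.mpr (fun S ha hb => (htr2 S ha).1 (htr3 S hb).1)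
  have hunion : F0 ∪ F1 ∪ F2 ∪ F3 ⊆ D :=
    Finset.union_subset (Finset.union_subset (Finset.union_subset hF0D hF1D) hF2D) hF3D
  have hcardU : (F0 ∪ F1 ∪ F2 ∪ F3).card = F0.card + F1.card + F2.card + F3.card := by
    rw [Finset.card_union_of_disjoint (by
      refine Finset.disjoint_union_left.mpr ⟨Finset.disjoint_union_left.mpr ⟨hdisj03, hdisj13⟩, hdisj23⟩)]
    rw [Finset.card_union_of_disjoint (Finset.disjoint_union_left.mpr ⟨hdisj02, hdisj12⟩)]
    rw [Finset.card_union_of_disjoint hdisj01]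
  calc F0.card + 2 * F1.card + F3.card
      = F0.card + F1.card + F2.card + F3.card := by rw [hcard2]; ring
  _ = (F0 ∪ F1 ∪ F2 ∪ F3).card := hcardU.symm
  _ ≤ D.card := Finset.card_le_card hunion
  _ = scnt k (mrg G u w) Finset.univ := by rw [hD]; rfl

lemma merge_double {k : ℕ} (hk : 3 ≤ k) (G : Fin n → Fin n → Bool) {u w : Fin n}
    (huw : u ≠ w) (h1 : G u w = false) (h2 : G w u = false) :
    2 * scnt k G Finset.univ
      ≤ scnt k (mrg G u w) Finset.univ + scnt k (mrg G w u) Finset.univ := by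
  set C := Finset.univ.powerset.filter (isCfg k G) with hC
  have e0 : (C.filter (fun S => u ∈ S)).card + (C.filter (fun S => u ∉ S)).card = C.card :=
    Finset.card_filter_add_card_filter_not _
  have e1 : ((C.filter (fun S => u ∈ S)).filter (fun S => w ∈ S)).card
      + ((C.filter (fun S => u ∈ S)).filter (fun S => w ∉ S)).card
      = (C.filter (fun S => u ∈ S)).card :=
    Finset.card_filter_add_card_filter_not _
  have e2 : ((C.filter (fun S => u ∉ S)).filter (fun S => w ∈ S)).card
      + ((C.filter (fun S => u ∉ S)).filter (fun S => w ∉ S)).card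
      = (C.filter (fun S => u ∉ S)).card :=
    Finset.card_filter_add_card_filter_not _
  have f1 : (C.filter (fun S => u ∈ S)).filter (fun S => w ∈ S)
      = C.filter (fun S => u ∈ S ∧ w ∈ S) := by
    ext S
    simp only [Finset.mem_filter]
    tauto
  have f2 : (C.filter (fun S => u ∈ S)).filter (fun S => w ∉ S)
      = C.filter (fun S => u ∈ S ∧ w ∉ S) := by
    ext S
    simp only [Finset.mem_filter]
    tauto
  have f3 : (C.filter (fun S => u ∉ S)).filter (fun S => w ∈ S)
      = C.filter (fun S => u ∉ S ∧ w ∈ S) := by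
    ext S
    simp only [Finset.mem_filter]
    tauto
  have f4 : (C.filter (fun S => u ∉ S)).filter (fun S => w ∉ S)
      = C.filter (fun S => u ∉ S ∧ w ∉ S) := by
    ext S
    simp only [Finset.mem_filter]
    tauto
  rw [f1, f2] at e1
  rw [f3, f4] at e2
  have hA := merge_ge hk G huw h1 h2
  have hB := merge_ge hk G (Ne.symm huw) h2 h1
  rw [← hC] at hA hB
  have c1 : C.filter (fun S => w ∉ S ∧ u ∉ S) = C.filter (fun S => u ∉ S ∧ w ∉ S) := by
    ext S
    simp only [Finset.mem_filter]
    tauto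
  have c2 : C.filter (fun S => w ∈ S ∧ u ∉ S) = C.filter (fun S => u ∉ S ∧ w ∈ S) := by
    ext S
    simp only [Finset.mem_filter]
    tauto
  have c3 : C.filter (fun S => w ∈ S ∧ u ∈ S) = C.filter (fun S => u ∈ S ∧ w ∈ S) := by
    ext S
    simp only [Finset.mem_filter]
    tauto
  rw [c1, c2, c3] at hB
  have hscnt : scnt k G Finset.univ = C.card := by rw [hC]; rfl
  omega

/-! ### twin measure -/

instance (G : Fin n → Fin n → Bool) (a b : Fin n) : Decidable (twin G a b) := by
  unfold twin; infer_instance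

def twinN (G : Fin n → Fin n → Bool) (a b : Fin n) : Prop :=
  a ≠ b ∧ G a b = false ∧ G b a = false ∧ twin G a b

instance (G : Fin n → Fin n → Bool) (a b : Fin n) : Decidable (twinN G a b) := by
  unfold twinN; infer_instance

def mgood (G : Fin n → Fin n → Bool) : ℕ :=
  (Finset.univ.filter (fun p : Fin n × Fin n => twinN G p.1 p.2)).card

def tset (G : Fin n → Fin n → Bool) (u w : Fin n) : Finset (Fin n) :=
  Finset.univ.filter (fun a => a ≠ u ∧ a ≠ w ∧ twinN G u a)

lemma twin_symm {G : Fin n → Fin n → Bool} {a b : Fin n} (h : twin G a b) : twin G b a := by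
  intro y hyb hya
  obtain ⟨c1, c2⟩ := h y hya hyb
  exact ⟨c1.symm, c2.symm⟩

lemma twinN_symm {G : Fin n → Fin n → Bool} {a b : Fin n} (h : twinN G a b) : twinN G b a := by
  obtain ⟨hab, e1, e2, htw⟩ := h
  exact ⟨Ne.symm hab, e2, e1, twin_symm htw⟩

lemma twinN_trans {G : Fin n → Fin n → Bool} {a b c : Fin n} (hac : a ≠ c)
    (h1 : twinN G a b) (h2 : twinN G b c) : twinN G a c := by
  obtain ⟨hab, e1, e2, htw1⟩ := h1
  obtain ⟨hbc, f1, f2, htw2⟩ := h2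
  obtain ⟨g1, g2⟩ := htw1 c (Ne.symm hac) (Ne.symm hbc)
  refine ⟨hac, g1.trans f1, g2.trans f2, ?_⟩
  intro y hya hyc
  by_cases hyb : y = b
  · subst hyb
    exact ⟨e1.trans f2.symm, e2.trans f1.symm⟩
  · obtain ⟨p1, p2⟩ := htw1 y hya hyb
    obtain ⟨q1, q2⟩ := htw2 y hyb hyc
    exact ⟨p1.trans q1, p2.trans q2⟩

lemma twinN_mrg_keep {G : Fin n → Fin n → Bool} {u w a b : Fin n} (huw : u ≠ w)
    (haw : a ≠ w) (hbw : b ≠ w) (h : twinN G a b) : twinN (mrg G u w) a b := by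
  obtain ⟨hab, e1, e2, htw⟩ := h
  refine ⟨hab, ?_, ?_, ?_⟩
  · rw [mrg_nw haw hbw hab]; exact e1
  · rw [mrg_nw hbw haw (Ne.symm hab)]; exact e2
  · intro y hya hyb
    by_cases hyw : y = w
    · subst hyw
      constructor
      · by_cases hau : a = u
        · by_cases hbu : b = u
          · exact absurd (hau.trans hbu.symm) hab
          · have e2' : G b u = false := by rw [← hau]; exact e2
            rw [hau, mrg_uw, mrg_aw hbu hbw, e2']
        · by_cases hbu : b = u
          · have e1' : G a u = false := by rw [← hbu]; exact e1
            rw [hbu, mrg_uw, mrg_aw hau haw, e1']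
          · rw [mrg_aw hau haw, mrg_aw hbu hbw]
            exact (htw u (fun h => hau h.symm) (fun h => hbu h.symm)).1
      · by_cases hau : a = u
        · by_cases hbu : b = u
          · exact absurd (hau.trans hbu.symm) hab
          · have e1' : G u b = false := by rw [← hau]; exact e1
            rw [hau, mrg_wu, mrg_wa huw hbu hbw, e1']
        · by_cases hbu : b = u
          · have e2' : G u a = false := by rw [← hbu]; exact e2
            rw [hbu, mrg_wu, mrg_wa huw hau haw, e2']
          · rw [mrg_wa huw hau haw, mrg_wa huw hbu hbw]
            exact (htw u (fun h => hau h.symm) (fun h => hbu h.symm)).2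
    · constructor
      · rw [mrg_nw haw hyw (Ne.symm hya), mrg_nw hbw hyw (Ne.symm hyb)]
        exact (htw y hya hyb).1
      · rw [mrg_nw hyw haw hya, mrg_nw hyw hbw hyb]
        exact (htw y hya hyb).2

lemma twinN_mrg_new {G : Fin n → Fin n → Bool} {u w : Fin n} (huw : u ≠ w) :
    twinN (mrg G u w) u w := by
  refine ⟨huw, mrg_uw, mrg_wu, ?_⟩
  intro y hyu hyw
  constructor
  · rw [mrg_nw huw hyw (Ne.symm hyu), mrg_wa huw hyu hyw]
  · rw [mrg_nw hyw huw hyu, mrg_aw hyu hyw]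

lemma mgood_le {G : Fin n → Fin n → Bool} {u w : Fin n} (hnt : ¬ twin G u w) :
    mgood G ≤ (Finset.univ.filter
        (fun p : Fin n × Fin n => p.1 ≠ w ∧ p.2 ≠ w ∧ twinN G p.1 p.2)).card
      + 2 * (tset G w u).card := by
  set T := Finset.univ.filter
    (fun p : Fin n × Fin n => p.1 ≠ w ∧ p.2 ≠ w ∧ twinN G p.1 p.2) with hT
  set P2 := (tset G w u).image (fun a => ((w, a) : Fin n × Fin n)) with hP2
  set P3 := (tset G w u).image (fun a => ((a, w) : Fin n × Fin n)) with hP3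
  have hsub : Finset.univ.filter (fun p : Fin n × Fin n => twinN G p.1 p.2)
      ⊆ T ∪ P2 ∪ P3 := by
    intro p hp
    have htw : twinN G p.1 p.2 := (Finset.mem_filter.mp hp).2
    by_cases hp1 : p.1 = w
    · refine Finset.mem_union_left _ (Finset.mem_union_right _ ?_)
      refine Finset.mem_image.mpr ⟨p.2, ?_, by rw [← hp1]⟩
      have htw' : twinN G w p.2 := by rw [← hp1]; exact htw
      refine Finset.mem_filter.mpr ⟨Finset.mem_univ _, ?_, ?_, htw'⟩
      · exact fun h => htw.1 (by rw [hp1, h])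
      · intro h
        rw [h] at htw'
        exact hnt (twin_symm htw'.2.2.2)
    · by_cases hp2 : p.2 = w
      · refine Finset.mem_union_right _ ?_
        refine Finset.mem_image.mpr ⟨p.1, ?_, by rw [← hp2]⟩
        have htw' : twinN G w p.1 := by rw [← hp2]; exact twinN_symm htw
        refine Finset.mem_filter.mpr ⟨Finset.mem_univ _, hp1, ?_, htw'⟩
        intro h
        rw [h] at htw'
        exact hnt (twin_symm htw'.2.2.2)
      · exact Finset.mem_union_left _ (Finset.mem_union_left _
          (Finset.mem_filter.mpr ⟨Finset.mem_univ _, hp1, hp2, htw⟩))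
  have h2a : P2.card ≤ (tset G w u).card := Finset.card_image_le
  have h3a : P3.card ≤ (tset G w u).card := Finset.card_image_le
  have := Finset.card_le_card hsub
  have hle2 := le_trans this (le_trans (Finset.card_union_le _ _)
    (Nat.add_le_add (Finset.card_union_le T P2) le_rfl))
  unfold mgood
  omega

lemma mgood_ge {G : Fin n → Fin n → Bool} {u w : Fin n} (huw : u ≠ w)
    (h1 : G u w = false) (h2 : G w u = false) :
    (Finset.univ.filter
        (fun p : Fin n × Fin n => p.1 ≠ w ∧ p.2 ≠ w ∧ twinN G p.1 p.2)).card
      + 2 * (tset G u w).card + 2 ≤ mgood (mrg G u w) := by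
  set G' := mrg G u w with hG'
  set P1 := Finset.univ.filter
    (fun p : Fin n × Fin n => p.1 ≠ w ∧ p.2 ≠ w ∧ twinN G p.1 p.2) with hP1
  set P2 := (tset G u w).image (fun a => ((w, a) : Fin n × Fin n)) with hP2
  set P3 := (tset G u w).image (fun a => ((a, w) : Fin n × Fin n)) with hP3
  set P4 := ({((u, w) : Fin n × Fin n)} : Finset (Fin n × Fin n)) with hP4
  set P5 := ({((w, u) : Fin n × Fin n)} : Finset (Fin n × Fin n)) with hP5
  -- twin facts
  have hnew : twinN G' u w := twinN_mrg_new huw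
  have htrans : ∀ a : Fin n, a ≠ u → a ≠ w → twinN G u a → twinN G' w a := by
    intro a hau haw htw
    have t1 : twinN G' u a := twinN_mrg_keep huw huw haw htw
    exact twinN_trans (Ne.symm haw) (twinN_symm hnew) t1
  -- inclusions
  have hsub : P1 ∪ (P2 ∪ (P3 ∪ (P4 ∪ P5)))
      ⊆ Finset.univ.filter (fun p : Fin n × Fin n => twinN G' p.1 p.2) := by
    intro p hp
    refine Finset.mem_filter.mpr ⟨Finset.mem_univ _, ?_⟩
    rcases Finset.mem_union.mp hp with hp | hp
    · obtain ⟨-, hq1, hq2, htw⟩ := Finset.mem_filter.mp hp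
      exact twinN_mrg_keep huw hq1 hq2 htw
    rcases Finset.mem_union.mp hp with hp | hp
    · obtain ⟨a, ha, rfl⟩ := Finset.mem_image.mp hp
      obtain ⟨-, hau, haw, htw⟩ := Finset.mem_filter.mp ha
      exact htrans a hau haw htw
    rcases Finset.mem_union.mp hp with hp | hp
    · obtain ⟨a, ha, rfl⟩ := Finset.mem_image.mp hp
      obtain ⟨-, hau, haw, htw⟩ := Finset.mem_filter.mp ha
      exact twinN_symm (htrans a hau haw htw)
    rcases Finset.mem_union.mp hp with hp | hp
    · rw [Finset.mem_singleton.mp hp]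
      exact hnew
    · rw [Finset.mem_singleton.mp hp]
      exact twinN_symm hnew
  -- traces
  have htr2 : ∀ p ∈ P2, p.1 = w ∧ p.2 ≠ u ∧ p.2 ≠ w := by
    intro p hp
    obtain ⟨a, ha, rfl⟩ := Finset.mem_image.mp hp
    obtain ⟨-, hau, haw, -⟩ := Finset.mem_filter.mp ha
    exact ⟨rfl, hau, haw⟩
  have htr3 : ∀ p ∈ P3, p.2 = w ∧ p.1 ≠ u ∧ p.1 ≠ w := by
    intro p hp
    obtain ⟨a, ha, rfl⟩ := Finset.mem_image.mp hp
    obtain ⟨-, hau, haw, -⟩ := Finset.mem_filter.mp ha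
    exact ⟨rfl, hau, haw⟩
  have htr1 : ∀ p ∈ P1, p.1 ≠ w ∧ p.2 ≠ w := by
    intro p hp
    obtain ⟨-, hq1, hq2, -⟩ := Finset.mem_filter.mp hp
    exact ⟨hq1, hq2⟩
  -- disjointness
  have d45 : Disjoint P4 P5 := by
    rw [Finset.disjoint_left]
    intro p hp hp'
    have e1 := Finset.mem_singleton.mp hp
    have e2 := Finset.mem_singleton.mp hp'
    rw [e1] at e2
    exact huw (congrArg Prod.fst e2)
  have d34 : Disjoint P3 P4 := by
    rw [Finset.disjoint_left]
    intro p hp hp'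
    exact (htr3 p hp).2.1 (congrArg Prod.fst (Finset.mem_singleton.mp hp'))
  have d35 : Disjoint P3 P5 := by
    rw [Finset.disjoint_left]
    intro p hp hp'
    exact huw ((congrArg Prod.snd (Finset.mem_singleton.mp hp')).symm.trans (htr3 p hp).1)
  have d23 : Disjoint P2 P3 := by
    rw [Finset.disjoint_left]
    intro p hp hp'
    exact (htr3 p hp').2.2 (htr2 p hp).1
  have d24 : Disjoint P2 P4 := by
    rw [Finset.disjoint_left]
    intro p hp hp'
    exact huw ((congrArg Prod.fst (Finset.mem_singleton.mp hp')).symm.trans (htr2 p hp).1)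
  have d25 : Disjoint P2 P5 := by
    rw [Finset.disjoint_left]
    intro p hp hp'
    exact (htr2 p hp).2.1 (congrArg Prod.snd (Finset.mem_singleton.mp hp'))
  have d12 : Disjoint P1 P2 := by
    rw [Finset.disjoint_left]
    intro p hp hp'
    exact (htr1 p hp).1 (htr2 p hp').1
  have d13 : Disjoint P1 P3 := by
    rw [Finset.disjoint_left]
    intro p hp hp'
    exact (htr1 p hp).2 (htr3 p hp').1
  have d14 : Disjoint P1 P4 := by
    rw [Finset.disjoint_left]
    intro p hp hp'
    exact (htr1 p hp).2 (congrArg Prod.snd (Finset.mem_singleton.mp hp'))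
  have d15 : Disjoint P1 P5 := by
    rw [Finset.disjoint_left]
    intro p hp hp'
    exact (htr1 p hp).1 (congrArg Prod.fst (Finset.mem_singleton.mp hp'))
  have hc2 : P2.card = (tset G u w).card :=
    Finset.card_image_of_injective _ (fun a b h => by simpa using h)
  have hc3 : P3.card = (tset G u w).card :=
    Finset.card_image_of_injective _ (fun a b h => by simpa using h)
  have hc4 : P4.card = 1 := Finset.card_singleton _
  have hc5 : P5.card = 1 := Finset.card_singleton _
  have hcard : (P1 ∪ (P2 ∪ (P3 ∪ (P4 ∪ P5)))).card
      = P1.card + ((tset G u w).card + ((tset G u w).card + (1 + 1))) := by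
    rw [Finset.card_union_of_disjoint (Finset.disjoint_union_right.mpr ⟨d12,
      Finset.disjoint_union_right.mpr ⟨d13, Finset.disjoint_union_right.mpr ⟨d14, d15⟩⟩⟩)]
    rw [Finset.card_union_of_disjoint (Finset.disjoint_union_right.mpr ⟨d23,
      Finset.disjoint_union_right.mpr ⟨d24, d25⟩⟩)]
    rw [Finset.card_union_of_disjoint (Finset.disjoint_union_right.mpr ⟨d34, d35⟩)]
    rw [Finset.card_union_of_disjoint d45]
    rw [hc2, hc3, hc4, hc5]
  have hle := Finset.card_le_card hsub
  rw [hcard] at hle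
  have hmg : mgood G' = (Finset.univ.filter
      (fun p : Fin n × Fin n => twinN G' p.1 p.2)).card := rfl
  omega

lemma mgood_step {G : Fin n → Fin n → Bool} {u w : Fin n} (huw : u ≠ w)
    (h1 : G u w = false) (h2 : G w u = false) (hnt : ¬ twin G u w)
    (hle : (tset G w u).card ≤ (tset G u w).card) :
    mgood G + 2 ≤ mgood (mrg G u w) := by
  have ha := mgood_le (u := u) hnt
  have hb := mgood_ge huw h1 h2
  omega

lemma scnt_lt {k : ℕ} (hk : 3 ≤ k) (G : Fin n → Fin n → Bool) :
    scnt k G (Finset.univ : Finset (Fin n)) < 2^n := by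
  have h1 : (Finset.univ.powerset.filter (isCfg k G))
      ⊂ (Finset.univ : Finset (Fin n)).powerset := by
    rw [Finset.ssubset_iff_of_subset (Finset.filter_subset _ _)]
    refine ⟨∅, Finset.empty_mem_powerset _, ?_⟩
    intro hmem
    have := (Finset.mem_filter.mp hmem).2.1
    simp at this
    omega
  calc scnt k G Finset.univ < (Finset.univ : Finset (Fin n)).powerset.card :=
        Finset.card_lt_card h1
  _ = 2^n := by rw [Finset.card_powerset, Finset.card_univ, Fintype.card_fin]

lemma mgood_le_sq (G : Fin n → Fin n → Bool) : mgood G ≤ n * n := by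
  calc mgood G ≤ (Finset.univ : Finset (Fin n × Fin n)).card := Finset.card_filter_le _ _
  _ = n * n := by rw [Finset.card_univ]; simp

lemma scnt_le_alpha {k : ℕ} (hk : 3 ≤ k) :
    ∀ (m : ℕ) (G : Fin n → Fin n → Bool),
      (2^n - scnt k G Finset.univ) * (n*n+1) + (n*n - mgood G) ≤ m →
      (scnt k G Finset.univ : ℝ) ≤ alphaStar k * (n : ℝ)^k / (k.factorial : ℝ) := by
  intro m
  induction m with
  | zero =>
      intro G hm
      exfalso
      have h1 := scnt_lt (n := n) hk G
      have h2 : n*n+1 ≤ (2^n - scnt k G Finset.univ) * (n*n+1) :=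
        Nat.le_mul_of_pos_left _ (by omega)
      omega
  | succ m IH =>
      intro G hm
      by_cases hbad : ∃ u v : Fin n, u ≠ v ∧ G u v = false ∧ G v u = false ∧ ¬ twin G u v
      · obtain ⟨u, w, huw, h1, h2, hnt⟩ := hbad
        have hdub := merge_double hk G huw h1 h2
        have hlt1 := scnt_lt (n := n) hk (mrg G u w)
        have hlt2 := scnt_lt (n := n) hk (mrg G w u)
        have hlt0 := scnt_lt (n := n) hk G
        have hmg1 := mgood_le_sq (n := n) (mrg G u w)
        have hmg2 := mgood_le_sq (n := n) (mrg G w u)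
        have hmg0 := mgood_le_sq (n := n) G
        by_cases hca : scnt k G Finset.univ < scnt k (mrg G u w) Finset.univ
        · have hmeas : (2^n - scnt k (mrg G u w) Finset.univ) * (n*n+1)
              + (n*n - mgood (mrg G u w)) ≤ m := by
            have hq1 : (2^n - scnt k (mrg G u w) Finset.univ) * (n*n+1)
                ≤ (2^n - scnt k G Finset.univ - 1) * (n*n+1) :=
              Nat.mul_le_mul_right _ (by omega)
            have hq2 : (2^n - scnt k G Finset.univ - 1) * (n*n+1) + (n*n+1)
                = (2^n - scnt k G Finset.univ) * (n*n+1) := by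
              have he : (2^n - scnt k G Finset.univ - 1) + 1
                  = 2^n - scnt k G Finset.univ := by omega
              calc (2^n - scnt k G Finset.univ - 1) * (n*n+1) + (n*n+1)
                  = ((2^n - scnt k G Finset.univ - 1) + 1) * (n*n+1) := by ring
              _ = (2^n - scnt k G Finset.univ) * (n*n+1) := by rw [he]
            omega
          have hrec := IH (mrg G u w) hmeas
          calc (scnt k G Finset.univ : ℝ) ≤ (scnt k (mrg G u w) Finset.univ : ℝ) := by
                exact_mod_cast hca.le
          _ ≤ _ := hrec
        · by_cases hcb : scnt k G Finset.univ < scnt k (mrg G w u) Finset.univ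
          · have hmeas : (2^n - scnt k (mrg G w u) Finset.univ) * (n*n+1)
                + (n*n - mgood (mrg G w u)) ≤ m := by
              have hq1 : (2^n - scnt k (mrg G w u) Finset.univ) * (n*n+1)
                  ≤ (2^n - scnt k G Finset.univ - 1) * (n*n+1) :=
                Nat.mul_le_mul_right _ (by omega)
              have hq2 : (2^n - scnt k G Finset.univ - 1) * (n*n+1) + (n*n+1)
                  = (2^n - scnt k G Finset.univ) * (n*n+1) := by
                have he : (2^n - scnt k G Finset.univ - 1) + 1
                    = 2^n - scnt k G Finset.univ := by omega
                calc (2^n - scnt k G Finset.univ - 1) * (n*n+1) + (n*n+1)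
                    = ((2^n - scnt k G Finset.univ - 1) + 1) * (n*n+1) := by ring
                _ = (2^n - scnt k G Finset.univ) * (n*n+1) := by rw [he]
              omega
            have hrec := IH (mrg G w u) hmeas
            calc (scnt k G Finset.univ : ℝ) ≤ (scnt k (mrg G w u) Finset.univ : ℝ) := by
                  exact_mod_cast hcb.le
            _ ≤ _ := hrec
          · push_neg at hca hcb
            have heqa : scnt k (mrg G u w) Finset.univ = scnt k G Finset.univ := by omega
            have heqb : scnt k (mrg G w u) Finset.univ = scnt k G Finset.univ := by omega
            rcases le_total ((tset G w u).card) ((tset G u w).card) with hle | hle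
            · have hstep := mgood_step huw h1 h2 hnt hle
              have hmeas : (2^n - scnt k (mrg G u w) Finset.univ) * (n*n+1)
                  + (n*n - mgood (mrg G u w)) ≤ m := by
                rw [heqa]
                omega
              have hrec := IH (mrg G u w) hmeas
              rw [heqa] at hrec
              exact hrec
            · have hnt' : ¬ twin G w u := fun h => hnt (twin_symm h)
              have hstep := mgood_step (Ne.symm huw) h2 h1 hnt' hle
              have hmeas : (2^n - scnt k (mrg G w u) Finset.univ) * (n*n+1)
                  + (n*n - mgood (mrg G w u)) ≤ m := by
                rw [heqb]
                omega
              have hrec := IH (mrg G w u) hmeas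
              rw [heqb] at hrec
              exact hrec
      · push_neg at hbad
        have hstruct : structuredG G := fun a b hab e1 e2 => hbad a b hab e1 e2
        have hcu : (Finset.univ : Finset (Fin n)).card = n := by
          rw [Finset.card_univ, Fintype.card_fin]
        have hres := structured_count hk G hstruct n Finset.univ (le_of_eq hcu)
        rw [hcu] at hres
        exact hres

end StarAux

theorem star_inducibility_upper (k : ℕ) (hk : 3 ≤ k) (ε : ℝ) (hε : 0 < ε) :
    ∃ N : ℕ, ∀ n : ℕ, N ≤ n → ∀ D : Fin n → Fin n → Prop,
      (starCount k D : ℝ) ≤ (alphaStar k + ε) * (n.choose k : ℝ) := by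
  obtain ⟨N, hN⟩ := StarAux.final_num hk hε
  refine ⟨N, fun n hn D => ?_⟩
  classical
  set G : Fin n → Fin n → Bool := fun a b => decide (D a b) with hG
  have hGt : ∀ a b, D a b → G a b = true := by
    intro a b h
    simp [hG, h]
  have hGf : ∀ a b, ¬ D a b → G a b = false := by
    intro a b h
    simp [hG, h]
  have hsub : {S : Finset (Fin n) | S.card = k ∧
      ∃ v ∈ S, ∀ u ∈ S, ∀ w ∈ S, (D u w ↔ (u = v ∧ w ≠ v))}
      ⊆ ↑(Finset.univ.powerset.filter (StarAux.isCfg k G)) := by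
    intro S hS
    obtain ⟨hcard, v, hvS, hiff⟩ := hS
    rw [Finset.mem_coe, Finset.mem_filter]
    refine ⟨Finset.mem_powerset.mpr (Finset.subset_univ S), hcard, v, hvS, ?_, ?_⟩
    · intro a haS hav
      constructor
      · exact hGt v a ((hiff v hvS a haS).mpr ⟨rfl, hav⟩)
      · exact hGf a v (fun hD => ((hiff a haS v hvS).mp hD).2 rfl)
    · intro a haS b hbS hav hbv hab
      exact hGf a b (fun hD => hav ((hiff a haS b hbS).mp hD).1)
  have hcount : starCount k D ≤ StarAux.scnt k G Finset.univ := by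
    unfold starCount StarAux.scnt
    calc {S : Finset (Fin n) | S.card = k ∧
        ∃ v ∈ S, ∀ u ∈ S, ∀ w ∈ S, (D u w ↔ (u = v ∧ w ≠ v))}.ncard
        ≤ (↑(Finset.univ.powerset.filter (StarAux.isCfg k G)) : Set (Finset (Fin n))).ncard :=
          Set.ncard_le_ncard hsub (Finset.finite_toSet _)
    _ = (Finset.univ.powerset.filter (StarAux.isCfg k G)).card := Set.ncard_coe_finset _
  have hmain := StarAux.scnt_le_alpha (n := n) hk
    ((2^n - StarAux.scnt k G Finset.univ) * (n*n+1) + (n*n - StarAux.mgood G)) G le_rfl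
  calc (starCount k D : ℝ) ≤ (StarAux.scnt k G Finset.univ : ℝ) := by exact_mod_cast hcount
  _ ≤ alphaStar k * (n:ℝ)^k / (k.factorial : ℝ) := hmain
  _ ≤ (alphaStar k + ε) * (n.choose k : ℝ) := hN n hn
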